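/- Let S = K[x_1,...,x_n] with K an F-finite field of characteristic p, I a squarefree monomial ideal, R = S/I, and J ⊆ R a monomial ideal (image of a monomial ideal of S). Then for every e ∈ ℕ the Cartier contraction J_e ⊆ R is a monomial ideal, and consequently the Cartier core 𝒫(J) = ⋂_s J_s is a monomial ideal. -/

import Mathlib

set_option maxHeartbeats 1000000
set_option synthInstance.maxHeartbeats 1000000


open Filter

section Defs
variable (p : ℕ) {R : Type*} [CommRing R]

/-- A `p^{-e}`-linear (Cartier) operator on `R`: under the identification of `R^{1/p^e}`
with `R` (sending `f^{1/p^e}` to `f`), these are exactly the `R`-linear maps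
`R^{1/p^e} → R`. -/
def IsCartier (e : ℕ) (φ : R →+ R) : Prop :=
  ∀ a x : R, φ (a ^ p ^ e * x) = a * φ x

/-- `R` is `F`-pure: the inclusion `R ⊆ R^{1/p^e}` splits as a map of `R`-modules,
equivalently there is a Cartier operator sending `1` to `1`. -/
def FPure (R : Type*) [CommRing R] : Prop :=
  ∀ e : ℕ, ∃ φ : R →+ R, IsCartier p e φ ∧ φ 1 = 1

/-- `R` is `F`-finite: `R^{1/p^e}` is a finitely generated `R`-module, i.e. `R` is a
finitely generated module over its subring of `p^e`-th powers. -/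
def FFinite (R : Type*) [CommRing R] : Prop :=
  ∀ e : ℕ, ∃ s : Finset R, ∀ x : R, ∃ c : R → R, x = ∑ y ∈ s, c y ^ p ^ e * y

/-- The Frobenius power `J^{[q]}`, generated by the `q`-th powers of elements of `J`. -/
def frobeniusPower (J : Ideal R) (q : ℕ) : Ideal R :=
  Ideal.span ((fun f => f ^ q) '' (J : Set R))

/-- The Cartier contraction `J_e = { f | φ(f^{1/p^e}) ∈ J for all φ ∈ Hom_R(R^{1/p^e}, R) }`. -/
def cartierContraction (e : ℕ) (J : Ideal R) : Ideal R where
  carrier := { f | ∀ φ : R →+ R, IsCartier p e φ → φ f ∈ J }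
  add_mem' := fun ha hb φ hφ => by
    rw [map_add]; exact J.add_mem (ha φ hφ) (hb φ hφ)
  zero_mem' := fun φ hφ => by rw [map_zero]; exact J.zero_mem
  smul_mem' := by
    intro c f hf φ hφ
    have h : IsCartier p e (φ.comp (AddMonoidHom.mulLeft c)) := by
      intro a x
      simp only [AddMonoidHom.coe_comp, Function.comp_apply, AddMonoidHom.coe_mulLeft]
      rw [mul_left_comm]
      exact hφ a (c * x)
    simpa using hf _ h

/-- The Cartier core `𝒫(J) = ⋂ₛ Jₛ`. -/
def cartierCore (J : Ideal R) : Ideal R := ⨅ s : ℕ, cartierContraction p s J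

/-- `J` is uniformly `F`-compatible: `φ(J^{1/p^e}) ⊆ J` for all `e > 0` and all
`φ ∈ Hom_R(R^{1/p^e}, R)`. -/
def UniformlyFCompatible (J : Ideal R) : Prop :=
  ∀ e : ℕ, 0 < e → ∀ φ : R →+ R, IsCartier p e φ → ∀ f ∈ J, φ f ∈ J

/-- `ν_𝔞^J(q) = max { m | 𝔞^m ⊄ J^{[q]} }`. -/
noncomputable def nuNum (𝔞 J : Ideal R) (q : ℕ) : ℕ :=
  sSup { m : ℕ | ¬ 𝔞 ^ m ≤ frobeniusPower J q }

/-- `b_𝔞^J(p^e) = max { t | 𝔞^t ⊄ J_e }`. -/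
noncomputable def bNum (𝔞 J : Ideal R) (e : ℕ) : ℕ :=
  sSup { t : ℕ | ¬ 𝔞 ^ t ≤ cartierContraction p e J }

/-- `μ(𝔞)`, the minimal number of generators of `𝔞`. -/
noncomputable def muGen (𝔞 : Ideal R) : ℕ :=
  sInf { k : ℕ | ∃ s : Finset R, s.card = k ∧ Ideal.span (s : Set R) = 𝔞 }

end Defs

open MvPolynomial

/-- `I` is a squarefree monomial ideal of `K[x₁,…,xₙ]`: it is generated by squarefree
monomials `x^N = ∏_{i ∈ N} xᵢ`. -/
def IsSquarefreeMonomialIdeal {K : Type*} [Field K] {n : ℕ}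
    (I : Ideal (MvPolynomial (Fin n) K)) : Prop :=
  ∃ A : Set (Finset (Fin n)),
    I = Ideal.span ((fun N => monomial (∑ i ∈ N, Finsupp.single i 1) (1 : K)) '' A)

/-- An ideal of the Stanley–Reisner ring `R = S ⧸ I` is a monomial ideal when it is
generated by images of monomials of `S`. -/
def IsMonomialQuotIdeal {K : Type*} [Field K] {n : ℕ}
    (I : Ideal (MvPolynomial (Fin n) K)) (J : Ideal (MvPolynomial (Fin n) K ⧸ I)) : Prop :=
  ∃ B : Set (Fin n →₀ ℕ),
    J = Ideal.span ((fun a => Ideal.Quotient.mk I (monomial a (1 : K))) '' B)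

namespace CartierAux

open MvPolynomial

variable {K : Type*} [Field K] {n : ℕ}

theorem comp_mem_span {T : Set (Fin n →₀ ℕ)} {g : MvPolynomial (Fin n) K}
    (hg : g ∈ Ideal.span ((fun s => monomial s (1 : K)) '' T)) (c : Fin n →₀ ℕ) :
    monomial c (coeff c g) ∈ Ideal.span ((fun s => monomial s (1 : K)) '' T) := by
  classical
  rw [mem_ideal_span_monomial_image] at hg ⊢
  intro xi hxi
  rw [mem_support_iff, coeff_monomial] at hxi
  split_ifs at hxi with h
  · subst h
    exact hg c (mem_support_iff.mpr hxi)
  · exact absurd rfl hxi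

section ProjQ

variable (I : Ideal (MvPolynomial (Fin n) K))

/-- projection onto the `c`-th monomial component, descended to the quotient -/
noncomputable def projQFun (hmI : ∀ g ∈ I, ∀ c, monomial c (coeff c g) ∈ I) (c : Fin n →₀ ℕ) :
    (MvPolynomial (Fin n) K ⧸ I) → (MvPolynomial (Fin n) K ⧸ I) := fun x =>
  Quotient.liftOn' x (fun g => Ideal.Quotient.mk I (monomial c (coeff c g))) (by
    intro a b hab
    have h : a - b ∈ I := (Submodule.quotientRel_def I).mp hab
    have h2 := hmI _ h c
    show Ideal.Quotient.mk I (monomial c (coeff c a)) = Ideal.Quotient.mk I (monomial c (coeff c b))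
    rw [Ideal.Quotient.mk_eq_mk_iff_sub_mem]
    have h4 : monomial c (coeff c a) - monomial c (coeff c b)
        = monomial c (coeff c (a - b)) := by
      rw [coeff_sub]; exact (map_sub (monomial c) _ _).symm
    rw [h4]; exact h2)

variable (hmI : ∀ g ∈ I, ∀ c, monomial c (coeff c g) ∈ I)

theorem projQFun_mk (c : Fin n →₀ ℕ) (g : MvPolynomial (Fin n) K) :
    projQFun I hmI c (Ideal.Quotient.mk I g) = Ideal.Quotient.mk I (monomial c (coeff c g)) :=
  rfl

theorem projQFun_add (c : Fin n →₀ ℕ) (x y : MvPolynomial (Fin n) K ⧸ I) :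
    projQFun I hmI c (x + y) = projQFun I hmI c x + projQFun I hmI c y := by
  obtain ⟨a, rfl⟩ := Ideal.Quotient.mk_surjective x
  obtain ⟨b, rfl⟩ := Ideal.Quotient.mk_surjective y
  rw [← map_add, projQFun_mk, projQFun_mk, projQFun_mk, coeff_add, map_add, map_add]

/-- projection onto the `c`-th monomial component as an additive map on the quotient -/
noncomputable def projQ (c : Fin n →₀ ℕ) :
    (MvPolynomial (Fin n) K ⧸ I) →+ (MvPolynomial (Fin n) K ⧸ I) :=
  AddMonoidHom.mk' (projQFun I hmI c) (projQFun_add I hmI c)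

theorem projQ_mk (c : Fin n →₀ ℕ) (g : MvPolynomial (Fin n) K) :
    projQ I hmI c (Ideal.Quotient.mk I g) = Ideal.Quotient.mk I (monomial c (coeff c g)) :=
  rfl

theorem projQ_mul_monomial (b c : Fin n →₀ ℕ) (μ : K) (x : MvPolynomial (Fin n) K ⧸ I) :
    projQ I hmI (b + c) (Ideal.Quotient.mk I (monomial b μ) * x)
      = Ideal.Quotient.mk I (monomial b μ) * projQ I hmI c x := by
  obtain ⟨h, rfl⟩ := Ideal.Quotient.mk_surjective x
  rw [← map_mul, projQ_mk, projQ_mk, ← map_mul]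
  rw [coeff_monomial_mul, monomial_mul]

theorem projQ_mul_monomial_of_not_le {b c : Fin n →₀ ℕ} (hbc : ¬ b ≤ c) (μ : K)
    (x : MvPolynomial (Fin n) K ⧸ I) :
    projQ I hmI c (Ideal.Quotient.mk I (monomial b μ) * x) = 0 := by
  classical
  obtain ⟨h, rfl⟩ := Ideal.Quotient.mk_surjective x
  rw [← map_mul, projQ_mk, coeff_monomial_mul', if_neg hbc, monomial_zero, map_zero]

theorem projQ_projQ (c c' : Fin n →₀ ℕ) (x : MvPolynomial (Fin n) K ⧸ I) :
    projQ I hmI c' (projQ I hmI c x) = if c = c' then projQ I hmI c x else 0 := by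
  classical
  obtain ⟨h, rfl⟩ := Ideal.Quotient.mk_surjective x
  rw [projQ_mk, projQ_mk, coeff_monomial]
  split_ifs with hcc
  · subst hcc; rfl
  · rw [monomial_zero, map_zero]

theorem sum_projQ (g : MvPolynomial (Fin n) K) :
    Ideal.Quotient.mk I g
      = ∑ c ∈ g.support, projQ I hmI c (Ideal.Quotient.mk I g) := by
  conv_lhs => rw [← support_sum_monomial_coeff g]
  rw [map_sum]
  exact Finset.sum_congr rfl fun c _ => (projQ_mk I hmI c g).symm

end ProjQ

section Psi

variable (I : Ideal (MvPolynomial (Fin n) K))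
variable (hmI : ∀ g ∈ I, ∀ c, monomial c (coeff c g) ∈ I)
variable (q : ℕ) (a0 c0 : Fin n →₀ ℕ)
variable (φ : (MvPolynomial (Fin n) K ⧸ I) →+ (MvPolynomial (Fin n) K ⧸ I))

theorem cnd_unique (hq : 0 < q) {a c c' : Fin n →₀ ℕ}
    (h1 : a + q • c0 = a0 + q • c) (h2 : a + q • c0 = a0 + q • c') : c = c' := by
  ext i
  have hi1 := DFunLike.congr_fun h1 i
  have hi2 := DFunLike.congr_fun h2 i
  simp only [Finsupp.add_apply, Finsupp.smul_apply, smul_eq_mul] at hi1 hi2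
  exact Nat.eq_of_mul_eq_mul_left hq (by omega)

theorem cnd_shift {a c : Fin n →₀ ℕ} (b : Fin n →₀ ℕ)
    (h : a + q • c0 = a0 + q • c) :
    (q • b + a) + q • c0 = a0 + q • (b + c) := by
  ext i
  have hi := DFunLike.congr_fun h i
  simp only [Finsupp.add_apply, Finsupp.smul_apply, smul_eq_mul] at hi ⊢
  rw [Nat.mul_add]
  omega

theorem cnd_unshift {a c' b : Finsupp (Fin n) ℕ} (hle : b ≤ c')
    (h : (q • b + a) + q • c0 = a0 + q • c') :
    a + q • c0 = a0 + q • (c' - b) := by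
  ext i
  have hi := DFunLike.congr_fun h i
  have hbi : b i ≤ c' i := hle i
  have hms : q * (c' i - b i) = q * c' i - q * b i := Nat.mul_sub ..
  have hmle : q * b i ≤ q * c' i := Nat.mul_le_mul_left q hbi
  simp only [Finsupp.add_apply, Finsupp.smul_apply, smul_eq_mul, Finsupp.tsub_apply] at hi ⊢
  omega

open Classical in
/-- the diagonal piece of `φ` sending the `a`-component to the output component
`c0 + (a - a0)/q`, applied to a single monomial -/
noncomputable def termf (a : Fin n →₀ ℕ) (lam : K) : MvPolynomial (Fin n) K ⧸ I :=
  if h : ∃ c, a + q • c0 = a0 + q • c then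
    projQ I hmI h.choose (φ (Ideal.Quotient.mk I (monomial a lam)))
  else 0

theorem termf_spec (hq : 0 < q) {a c : Fin n →₀ ℕ} (hc : a + q • c0 = a0 + q • c) (lam : K) :
    termf I hmI q a0 c0 φ a lam
      = projQ I hmI c (φ (Ideal.Quotient.mk I (monomial a lam))) := by
  have h : ∃ c, a + q • c0 = a0 + q • c := ⟨c, hc⟩
  rw [termf, dif_pos h, cnd_unique q a0 c0 hq h.choose_spec hc]

theorem termf_none {a : Fin n →₀ ℕ} (h : ¬ ∃ c, a + q • c0 = a0 + q • c) (lam : K) :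
    termf I hmI q a0 c0 φ a lam = 0 := dif_neg h

theorem termf_zero (a : Fin n →₀ ℕ) : termf I hmI q a0 c0 φ a 0 = 0 := by
  rw [termf]
  split
  · rw [monomial_zero, map_zero, map_zero, map_zero]
  · rfl

theorem termf_add (a : Fin n →₀ ℕ) (l1 l2 : K) :
    termf I hmI q a0 c0 φ a (l1 + l2)
      = termf I hmI q a0 c0 φ a l1 + termf I hmI q a0 c0 φ a l2 := by
  rw [termf, termf, termf]
  split
  · rw [← map_add, ← map_add, ← map_add, (monomial a).map_add]
  · rw [add_zero]

theorem termf_neg (a : Fin n →₀ ℕ) (l : K) :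
    termf I hmI q a0 c0 φ a (-l) = - termf I hmI q a0 c0 φ a l := by
  rw [termf, termf]
  split
  · rw [show (monomial a) (-l) = -(monomial a l) from map_neg (monomial a) l,
      map_neg, map_neg, map_neg]
  · rw [neg_zero]

theorem termf_zero_of_mem {a : Fin n →₀ ℕ} {lam : K} (hmem : monomial a lam ∈ I) :
    termf I hmI q a0 c0 φ a lam = 0 := by
  rw [termf]
  split
  · rw [Ideal.Quotient.eq_zero_iff_mem.mpr hmem, map_zero, map_zero]
  · rfl

/-- the diagonal piece of `φ`, as a function on polynomial representatives -/
noncomputable def Psif (g : MvPolynomial (Fin n) K) : MvPolynomial (Fin n) K ⧸ I :=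
  ∑ a ∈ g.support, termf I hmI q a0 c0 φ a (coeff a g)

theorem Psif_def (g : MvPolynomial (Fin n) K) :
    Psif I hmI q a0 c0 φ g = ∑ a ∈ g.support, termf I hmI q a0 c0 φ a (coeff a g) := rfl

theorem Psif_sum_subset {g : MvPolynomial (Fin n) K} {s : Finset (Fin n →₀ ℕ)}
    (hs : g.support ⊆ s) :
    Psif I hmI q a0 c0 φ g = ∑ a ∈ s, termf I hmI q a0 c0 φ a (coeff a g) :=
  Finset.sum_subset hs fun a _ ha => by
    rw [notMem_support_iff.mp ha, termf_zero]

theorem Psif_add (g h : MvPolynomial (Fin n) K) :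
    Psif I hmI q a0 c0 φ (g + h) = Psif I hmI q a0 c0 φ g + Psif I hmI q a0 c0 φ h := by
  classical
  rw [Psif_sum_subset I hmI q a0 c0 φ (s := g.support ∪ h.support) support_add,
    Psif_sum_subset I hmI q a0 c0 φ (s := g.support ∪ h.support) Finset.subset_union_left,
    Psif_sum_subset I hmI q a0 c0 φ (s := g.support ∪ h.support) Finset.subset_union_right,
    ← Finset.sum_add_distrib]
  exact Finset.sum_congr rfl fun a _ => by rw [coeff_add, termf_add]

theorem Psif_zero : Psif I hmI q a0 c0 φ 0 = 0 := by
  simp [Psif_def]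

theorem Psif_neg (g : MvPolynomial (Fin n) K) :
    Psif I hmI q a0 c0 φ (-g) = - Psif I hmI q a0 c0 φ g := by
  rw [Psif_def, Psif_def, support_neg, ← Finset.sum_neg_distrib]
  exact Finset.sum_congr rfl fun a _ => by rw [coeff_neg, termf_neg]

theorem Psif_sub (g h : MvPolynomial (Fin n) K) :
    Psif I hmI q a0 c0 φ (g - h) = Psif I hmI q a0 c0 φ g - Psif I hmI q a0 c0 φ h := by
  rw [sub_eq_add_neg, Psif_add, Psif_neg, sub_eq_add_neg]

theorem Psif_monomial (a : Fin n →₀ ℕ) (lam : K) :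
    Psif I hmI q a0 c0 φ (monomial a lam) = termf I hmI q a0 c0 φ a lam := by
  classical
  by_cases hl : lam = 0
  · subst hl
    rw [monomial_zero, Psif_zero, termf_zero]
  · rw [Psif_def, support_monomial, if_neg hl, Finset.sum_singleton, coeff_monomial, if_pos rfl]

theorem Psif_of_mem {g : MvPolynomial (Fin n) K} (hg : g ∈ I) :
    Psif I hmI q a0 c0 φ g = 0 :=
  Finset.sum_eq_zero fun a _ => termf_zero_of_mem I hmI q a0 c0 φ (hmI g hg a)

/-- the diagonal piece of `φ`, as an additive map on the quotient ring -/
noncomputable def psi : (MvPolynomial (Fin n) K ⧸ I) →+ (MvPolynomial (Fin n) K ⧸ I) :=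
  AddMonoidHom.mk'
    (fun x => Quotient.liftOn' x (Psif I hmI q a0 c0 φ) (by
      intro g1 g2 h12
      have hd : g1 - g2 ∈ I := (Submodule.quotientRel_def I).mp h12
      have := Psif_of_mem I hmI q a0 c0 φ hd
      rw [Psif_sub] at this
      exact sub_eq_zero.mp this))
    (by
      intro x y
      obtain ⟨g1, rfl⟩ := Ideal.Quotient.mk_surjective x
      obtain ⟨g2, rfl⟩ := Ideal.Quotient.mk_surjective y
      show Psif I hmI q a0 c0 φ (g1 + g2)
        = Psif I hmI q a0 c0 φ g1 + Psif I hmI q a0 c0 φ g2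
      exact Psif_add I hmI q a0 c0 φ g1 g2)

theorem psi_mk (g : MvPolynomial (Fin n) K) :
    psi I hmI q a0 c0 φ (Ideal.Quotient.mk I g) = Psif I hmI q a0 c0 φ g := rfl

end Psi

section Cartier

variable (I : Ideal (MvPolynomial (Fin n) K))
variable (hmI : ∀ g ∈ I, ∀ c, monomial c (coeff c g) ∈ I)
variable (a0 c0 : Fin n →₀ ℕ)
variable (φ : (MvPolynomial (Fin n) K ⧸ I) →+ (MvPolynomial (Fin n) K ⧸ I))

theorem Psif_pow_mul {p : ℕ} (hp : p.Prime) [CharP K p] (e : ℕ)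
    (hφ : IsCartier p e φ) (v g : MvPolynomial (Fin n) K) :
    Psif I hmI (p ^ e) a0 c0 φ (v ^ p ^ e * g)
      = Ideal.Quotient.mk I v * Psif I hmI (p ^ e) a0 c0 φ g := by
  haveI := Fact.mk hp
  have hq : 0 < p ^ e := pow_pos hp.pos e
  induction v using MvPolynomial.induction_on' with
  | add v w ihv ihw =>
    rw [add_pow_char_pow, add_mul, Psif_add, ihv, ihw, map_add, add_mul]
  | monomial b μ =>
    induction g using MvPolynomial.induction_on' with
    | add g1 g2 ih1 ih2 =>
      rw [mul_add, Psif_add, ih1, ih2, Psif_add, mul_add]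
    | monomial a lam =>
      have hmm : (monomial b μ : MvPolynomial (Fin n) K) ^ p ^ e * monomial a lam
          = monomial (p ^ e • b + a) (μ ^ p ^ e * lam) := by
        rw [monomial_pow, monomial_mul]
      have hmk : Ideal.Quotient.mk I (monomial (p ^ e • b + a) (μ ^ p ^ e * lam))
          = (Ideal.Quotient.mk I (monomial b μ)) ^ p ^ e
            * Ideal.Quotient.mk I (monomial a lam) := by
        rw [← map_pow, ← map_mul, hmm]
      rw [hmm, Psif_monomial, Psif_monomial]
      by_cases h : ∃ c, a + p ^ e • c0 = a0 + p ^ e • c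
      · obtain ⟨c, hc⟩ := h
        rw [termf_spec I hmI (p ^ e) a0 c0 φ hq hc,
          termf_spec I hmI (p ^ e) a0 c0 φ hq (cnd_shift (p ^ e) a0 c0 b hc),
          hmk, hφ, projQ_mul_monomial]
      · rw [termf_none I hmI (p ^ e) a0 c0 φ h, mul_zero]
        by_cases h' : ∃ c', (p ^ e • b + a) + p ^ e • c0 = a0 + p ^ e • c'
        · obtain ⟨c', hc'⟩ := h'
          have hble : ¬ b ≤ c' := fun hle =>
            h ⟨c' - b, cnd_unshift (p ^ e) a0 c0 hle hc'⟩
          rw [termf_spec I hmI (p ^ e) a0 c0 φ hq hc', hmk, hφ,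
            projQ_mul_monomial_of_not_le I hmI hble]
        · rw [termf_none I hmI (p ^ e) a0 c0 φ h']

theorem psi_cartier {p : ℕ} (hp : p.Prime) [CharP K p] (e : ℕ)
    (hφ : IsCartier p e φ) : IsCartier p e (psi I hmI (p ^ e) a0 c0 φ) := by
  intro u x
  obtain ⟨v, rfl⟩ := Ideal.Quotient.mk_surjective u
  obtain ⟨g, rfl⟩ := Ideal.Quotient.mk_surjective x
  rw [← map_pow, ← map_mul, psi_mk, psi_mk]
  exact Psif_pow_mul I hmI a0 c0 φ hp e hφ v g

end Cartier

theorem mem_cartierContraction_iff {R : Type*} [CommRing R] {p e : ℕ} {J : Ideal R} {x : R} :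
    x ∈ cartierContraction p e J ↔ ∀ φ : R →+ R, IsCartier p e φ → φ x ∈ J :=
  Iff.rfl

theorem component_mem {p : ℕ} (hp : p.Prime) [CharP K p]
    (I : Ideal (MvPolynomial (Fin n) K))
    (hmI : ∀ g ∈ I, ∀ c, monomial c (coeff c g) ∈ I)
    (J : Ideal (MvPolynomial (Fin n) K ⧸ I))
    (hJp : ∀ c, ∀ x ∈ J, projQ I hmI c x ∈ J) (e : ℕ)
    (g : MvPolynomial (Fin n) K)
    (hg : Ideal.Quotient.mk I g ∈ cartierContraction p e J) (a0 : Fin n →₀ ℕ) :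
    Ideal.Quotient.mk I (monomial a0 (coeff a0 g)) ∈ cartierContraction p e J := by
  classical
  rw [mem_cartierContraction_iff] at hg ⊢
  intro φ hφ
  have hq : 0 < p ^ e := pow_pos hp.pos e
  obtain ⟨h, hy⟩ := Ideal.Quotient.mk_surjective
    (φ (Ideal.Quotient.mk I (monomial a0 (coeff a0 g))))
  have hdec : φ (Ideal.Quotient.mk I (monomial a0 (coeff a0 g)))
      = ∑ c ∈ h.support, projQ I hmI c (φ (Ideal.Quotient.mk I (monomial a0 (coeff a0 g)))) := by
    conv_lhs => rw [← hy]
    rw [← hy]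
    exact sum_projQ I hmI h
  rw [hdec]
  refine Ideal.sum_mem _ fun c0 _ => ?_
  have hpsi : psi I hmI (p ^ e) a0 c0 φ (Ideal.Quotient.mk I g) ∈ J :=
    hg _ (psi_cartier I hmI a0 c0 φ hp e hφ)
  have hterm0 : ∀ a, a ≠ a0 →
      projQ I hmI c0 (termf I hmI (p ^ e) a0 c0 φ a (coeff a g)) = 0 := by
    intro a hne
    by_cases hc : ∃ c, a + p ^ e • c0 = a0 + p ^ e • c
    · obtain ⟨c, hc⟩ := hc
      have hcc0 : ¬ c = c0 := fun hcc => by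
        apply hne
        subst hcc
        exact add_right_cancel hc
      rw [termf_spec I hmI (p ^ e) a0 c0 φ hq hc, projQ_projQ, if_neg hcc0]
    · rw [termf_none I hmI (p ^ e) a0 c0 φ hc, map_zero]
  have hkey : projQ I hmI c0 (φ (Ideal.Quotient.mk I (monomial a0 (coeff a0 g))))
      = projQ I hmI c0 (psi I hmI (p ^ e) a0 c0 φ (Ideal.Quotient.mk I g)) := by
    rw [psi_mk, Psif_def, map_sum]
    by_cases ha0 : a0 ∈ g.support
    · rw [Finset.sum_eq_single_of_mem a0 ha0 (fun a _ hne => hterm0 a hne)]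
      rw [termf_spec I hmI (p ^ e) a0 c0 φ hq (rfl : a0 + p ^ e • c0 = a0 + p ^ e • c0),
        projQ_projQ, if_pos rfl]
    · rw [notMem_support_iff.mp ha0, monomial_zero, map_zero, map_zero, map_zero]
      symm
      exact Finset.sum_eq_zero fun a ha =>
        hterm0 a (fun hh => ha0 (hh ▸ ha))
  rw [hkey]
  exact hJp c0 _ hpsi

theorem isMonomial_of_components {I : Ideal (MvPolynomial (Fin n) K)}
    (J'' : Ideal (MvPolynomial (Fin n) K ⧸ I))
    (hcomp : ∀ g : MvPolynomial (Fin n) K, Ideal.Quotient.mk I g ∈ J'' →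
      ∀ a, Ideal.Quotient.mk I (monomial a (coeff a g)) ∈ J'') :
    IsMonomialQuotIdeal I J'' := by
  refine ⟨{a | Ideal.Quotient.mk I (monomial a (1 : K)) ∈ J''}, le_antisymm ?_ ?_⟩
  · intro x hx
    obtain ⟨g, rfl⟩ := Ideal.Quotient.mk_surjective x
    rw [show Ideal.Quotient.mk I g
        = ∑ a ∈ g.support, Ideal.Quotient.mk I (monomial a (coeff a g)) from by
      rw [← map_sum, support_sum_monomial_coeff]]
    refine Ideal.sum_mem _ fun a ha => ?_
    have hlam : coeff a g ≠ 0 := mem_support_iff.mp ha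
    have h1 : Ideal.Quotient.mk I (monomial a (coeff a g)) ∈ J'' := hcomp g hx a
    have h2 : Ideal.Quotient.mk I (monomial a (1 : K)) ∈ J'' := by
      have hmul : (Ideal.Quotient.mk I (C (coeff a g)⁻¹))
          * Ideal.Quotient.mk I (monomial a (coeff a g))
          = Ideal.Quotient.mk I (monomial a (1 : K)) := by
        rw [← map_mul, C_mul_monomial, inv_mul_cancel₀ hlam]
      exact hmul ▸ Ideal.mul_mem_left _ _ h1
    have h3 : Ideal.Quotient.mk I (monomial a (coeff a g))
        = Ideal.Quotient.mk I (C (coeff a g)) * Ideal.Quotient.mk I (monomial a (1 : K)) := by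
      rw [← map_mul, C_mul_monomial, mul_one]
    rw [h3]
    exact Ideal.mul_mem_left _ _ (Ideal.subset_span ⟨a, h2, rfl⟩)
  · rw [Ideal.span_le]
    rintro _ ⟨a, ha, rfl⟩
    exact ha

end CartierAux

/-- In a Stanley–Reisner ring `R = S/I` over an `F`-finite field of
characteristic `p`, for every monomial ideal `J` of `R` and every `e`, the Cartier
contraction `J_e` is a monomial ideal, and consequently the Cartier core `𝒫(J)` is a
monomial ideal. -/
theorem cartierContraction_isMonomial {K : Type*} [Field K] {n : ℕ}
    (p : ℕ) (hp : p.Prime) [CharP K p] (hK : FFinite p K)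
    (I : Ideal (MvPolynomial (Fin n) K)) (hI : IsSquarefreeMonomialIdeal I)
    (J : Ideal (MvPolynomial (Fin n) K ⧸ I)) (hJ : IsMonomialQuotIdeal I J) (e : ℕ) :
    IsMonomialQuotIdeal I (cartierContraction p e J) ∧
      IsMonomialQuotIdeal I (cartierCore p J) := by
  classical
  obtain ⟨A, hA⟩ := hI
  set T : Set (Fin n →₀ ℕ) := (fun N => ∑ i ∈ N, Finsupp.single i 1) '' A with hT
  have hIT : I = Ideal.span ((fun s => monomial s (1 : K)) '' T) := by
    rw [hA, hT, Set.image_image]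
  have hmI : ∀ g ∈ I, ∀ c, monomial c (coeff c g) ∈ I := by
    intro g hg c
    rw [hIT] at hg ⊢
    exact CartierAux.comp_mem_span hg c
  obtain ⟨B, hB⟩ := hJ
  have hmap : Ideal.map (Ideal.Quotient.mk I)
      (Ideal.span ((fun s => monomial s (1 : K)) '' (T ∪ B))) = J := by
    rw [Ideal.map_span]
    apply le_antisymm
    · rw [Ideal.span_le]
      rintro _ ⟨_, ⟨s, hs, rfl⟩, rfl⟩
      rcases hs with hsT | hsB
      · have hz : monomial s (1 : K) ∈ I := by
          rw [hIT]; exact Ideal.subset_span ⟨s, hsT, rfl⟩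
        rw [Ideal.Quotient.eq_zero_iff_mem.mpr hz]
        exact J.zero_mem
      · rw [hB]
        exact Ideal.subset_span ⟨s, hsB, rfl⟩
    · rw [hB, Ideal.span_le]
      rintro _ ⟨a, haB, rfl⟩
      exact Ideal.subset_span ⟨_, ⟨a, Or.inr haB, rfl⟩, rfl⟩
  have hJp : ∀ c, ∀ x ∈ J, CartierAux.projQ I hmI c x ∈ J := by
    intro c x hx
    rw [← hmap] at hx ⊢
    obtain ⟨g, hgmem, rfl⟩ :=
      (Ideal.mem_map_iff_of_surjective _ Ideal.Quotient.mk_surjective).mp hx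
    rw [CartierAux.projQ_mk]
    exact Ideal.mem_map_of_mem _ (CartierAux.comp_mem_span hgmem c)
  constructor
  · apply CartierAux.isMonomial_of_components
    intro g hg a
    exact CartierAux.component_mem hp I hmI J hJp e g hg a
  · apply CartierAux.isMonomial_of_components
    intro g hg a
    rw [cartierCore, Submodule.mem_iInf] at hg ⊢
    intro s
    exact CartierAux.component_mem hp I hmI J hJp s g (hg s) a
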